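/- (Key step of the four-vertex theorem) Let R : ℝ → ℝ be continuous, 2π-periodic and not constant, and suppose ∫_0^{2π} R(α)·cos(α) dα = 0 and ∫_0^{2π} R(α)·sin(α) dα = 0. Then R has at least 4 local extrema per period; that is, there exist four points 0 ≤ α₁ < α₂ < α₃ < α₄ < 2π each of which is a point of local maximum or of local minimum of R. (Applied to the radius of curvature of an oval as a function of the tangent angle, this yields the classical four-vertex theorem.) -/

import Mathlib

open Set MeasureTheory intervalIntegral

private lemma locmax_aux {f : ℝ → ℝ} (hf : Continuous f) {a b w : ℝ}
    (hw : w ∈ Set.Ioo a b) (ha : f a < f w) (hb : f b < f w) :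
    ∃ x ∈ Set.Ioo a b, IsLocalMax f x ∧ f w ≤ f x := by
  have hab : a ≤ b := (hw.1.trans hw.2).le
  obtain ⟨x, hxmem, hx⟩ := isCompact_Icc.exists_isMaxOn (Set.nonempty_Icc.2 hab)
    hf.continuousOn
  have hwx : f w ≤ f x := hx (Set.mem_Icc_of_Ioo hw)
  have hxIoo : x ∈ Set.Ioo a b := by
    refine ⟨lt_of_le_of_ne hxmem.1 ?_, lt_of_le_of_ne hxmem.2 ?_⟩
    · rintro rfl; exact absurd hwx (not_le.2 ha)
    · rintro rfl; exact absurd hwx (not_le.2 hb)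
  exact ⟨x, hxIoo, hx.isLocalMax (Icc_mem_nhds hxIoo.1 hxIoo.2), hwx⟩

private lemma locmin_aux {f : ℝ → ℝ} (hf : Continuous f) {a b w : ℝ}
    (hw : w ∈ Set.Ioo a b) (ha : f w < f a) (hb : f w < f b) :
    ∃ x ∈ Set.Ioo a b, IsLocalMin f x ∧ f x ≤ f w := by
  have hab : a ≤ b := (hw.1.trans hw.2).le
  obtain ⟨x, hxmem, hx⟩ := isCompact_Icc.exists_isMinOn (Set.nonempty_Icc.2 hab)
    hf.continuousOn
  have hwx : f x ≤ f w := hx (Set.mem_Icc_of_Ioo hw)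
  have hxIoo : x ∈ Set.Ioo a b := by
    refine ⟨lt_of_le_of_ne hxmem.1 ?_, lt_of_le_of_ne hxmem.2 ?_⟩
    · rintro rfl; exact absurd hwx (not_le.2 ha)
    · rintro rfl; exact absurd hwx (not_le.2 hb)
  exact ⟨x, hxIoo, hx.isLocalMin (Icc_mem_nhds hxIoo.1 hxIoo.2), hwx⟩

private lemma localmax_shift {f : ℝ → ℝ} {T x : ℝ} (hp : Function.Periodic f T)
    (h : IsLocalMax f x) : IsLocalMax f (x - T) := by
  have ht : Filter.Tendsto (fun y : ℝ => y + T) (nhds (x - T)) (nhds x) := by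
    have := (continuous_id.add (continuous_const : Continuous fun _ : ℝ => T)).tendsto (x - T)
    simpa [Pi.add_def] using this
  have h2 := ht.eventually h
  have hx : f (x - T) = f x := by rw [← hp (x - T), sub_add_cancel]
  filter_upwards [h2] with y hy
  rw [hp y] at hy
  rw [hx]
  exact hy

private lemma localmin_shift {f : ℝ → ℝ} {T x : ℝ} (hp : Function.Periodic f T)
    (h : IsLocalMin f x) : IsLocalMin f (x - T) := by
  have ht : Filter.Tendsto (fun y : ℝ => y + T) (nhds (x - T)) (nhds x) := by
    have := (continuous_id.add (continuous_const : Continuous fun _ : ℝ => T)).tendsto (x - T)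
    simpa [Pi.add_def] using this
  have h2 := ht.eventually h
  have hx : f (x - T) = f x := by rw [← hp (x - T), sub_add_cancel]
  filter_upwards [h2] with y hy
  rw [hp y] at hy
  rw [hx]
  exact hy


/-- Key step of the four-vertex theorem: a continuous `2π`-periodic nonconstant
function `R` whose first harmonics vanish has at least four local extrema per
period. -/
theorem four_extrema_of_vanishing_first_harmonics
    (R : ℝ → ℝ) (hc : Continuous R) (hper : Function.Periodic R (2 * Real.pi))
    (hnc : ∃ x y, R x ≠ R y)
    (hcos : ∫ α in (0:ℝ)..(2 * Real.pi), R α * Real.cos α = 0)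
    (hsin : ∫ α in (0:ℝ)..(2 * Real.pi), R α * Real.sin α = 0) :
    ∃ A : Fin 4 → ℝ, StrictMono A ∧ (∀ i, A i ∈ Set.Ico 0 (2 * Real.pi)) ∧
      ∀ i, IsLocalMax R (A i) ∨ IsLocalMin R (A i) := by
  have hπ : (0:ℝ) < 2 * Real.pi := by positivity
  have hπ' : (2 * Real.pi) ≠ 0 := hπ.ne'
  set c : ℝ := (∫ α in (0:ℝ)..(2 * Real.pi), R α) / (2 * Real.pi) with hc_def
  set g : ℝ → ℝ := fun α => R α - c with hg_def
  have hgc : Continuous g := hc.sub continuous_const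
  have hgper : Function.Periodic g (2 * Real.pi) := fun x => by simp [hg_def, hper x]
  -- integral of g over a period is zero
  have hg0 : ∫ α in (0:ℝ)..(2 * Real.pi), g α = 0 := by
    have : ∫ α in (0:ℝ)..(2 * Real.pi), g α
        = (∫ α in (0:ℝ)..(2 * Real.pi), R α) - (∫ α in (0:ℝ)..(2 * Real.pi), (c:ℝ)) := by
      rw [← intervalIntegral.integral_sub (hc.intervalIntegrable _ _)
        (intervalIntegrable_const)]
    have hmul : 2 * Real.pi * c = ∫ α in (0:ℝ)..(2 * Real.pi), R α := by
      rw [hc_def]; field_simp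
    rw [this, intervalIntegral.integral_const, smul_eq_mul]
    linear_combination -hmul
  -- first-harmonic integrals of g vanish
  have hgcos : ∀ m : ℝ, ∫ α in (0:ℝ)..(2 * Real.pi), g α * Real.cos (α - m) = 0 := by
    intro m
    have hptwise : ∀ α : ℝ, g α * Real.cos (α - m)
        = Real.cos m * (R α * Real.cos α) + Real.sin m * (R α * Real.sin α)
          - c * Real.cos (α - m) := by
      intro α
      simp only [hg_def]
      rw [Real.cos_sub]
      ring
    have hcosint : ∫ α in (0:ℝ)..(2 * Real.pi), Real.cos (α - m) = 0 := by
      rw [intervalIntegral.integral_comp_sub_right (fun x => Real.cos x) m, integral_cos]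
      rw [show 2 * Real.pi - m = -m + 2 * Real.pi by ring, Real.sin_add_two_pi]
      simp
    calc ∫ α in (0:ℝ)..(2 * Real.pi), g α * Real.cos (α - m)
        = ∫ α in (0:ℝ)..(2 * Real.pi),
            (Real.cos m * (R α * Real.cos α) + Real.sin m * (R α * Real.sin α)
              - c * Real.cos (α - m)) := by
          exact intervalIntegral.integral_congr (fun α _ => hptwise α)
      _ = 0 := by
          rw [intervalIntegral.integral_sub, intervalIntegral.integral_add,
            intervalIntegral.integral_const_mul, intervalIntegral.integral_const_mul,
            intervalIntegral.integral_const_mul, hcos, hsin, hcosint]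
          · ring
          · exact (continuous_const.mul (hc.mul Real.continuous_cos)).intervalIntegrable _ _
          · exact (continuous_const.mul (hc.mul Real.continuous_sin)).intervalIntegrable _ _
          · exact ((continuous_const.mul (hc.mul Real.continuous_cos)).add
              (continuous_const.mul (hc.mul Real.continuous_sin))).intervalIntegrable _ _
          · exact (continuous_const.mul
              (Real.continuous_cos.comp (continuous_id.sub continuous_const))).intervalIntegrable _ _
  -- a global maximum point p ∈ [0, 2π)
  obtain ⟨p₀, hp₀mem, hp₀⟩ := isCompact_Icc.exists_isMaxOn (Set.nonempty_Icc.2 hπ.le)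
    (hc.continuousOn (s := Set.Icc 0 (2 * Real.pi)))
  have hglob₀ : ∀ x, R x ≤ R p₀ := by
    intro x
    obtain ⟨y, hy, hxy⟩ := hper.exists_mem_Ico₀ hπ x
    rw [hxy]
    exact hp₀ (Set.Ico_subset_Icc_self hy)
  obtain ⟨p, hpmem, hpmax⟩ : ∃ p, p ∈ Set.Ico 0 (2 * Real.pi) ∧ ∀ x, R x ≤ R p := by
    rcases lt_or_eq_of_le hp₀mem.2 with h | h
    · exact ⟨p₀, ⟨hp₀mem.1, h⟩, hglob₀⟩
    · refine ⟨0, ⟨le_refl 0, hπ⟩, fun x => ?_⟩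
      have : R p₀ = R 0 := by rw [h, show 2 * Real.pi = 0 + 2 * Real.pi by ring, hper 0]
      rw [← this]; exact hglob₀ x
  -- g p > 0
  have hgp : 0 < g p := by
    have key : ∫ α in (0:ℝ)..(2 * Real.pi), (R p - R α) = 2 * Real.pi * g p := by
      rw [intervalIntegral.integral_sub intervalIntegrable_const
        (hc.intervalIntegrable _ _), intervalIntegral.integral_const, smul_eq_mul]
      have hmul : 2 * Real.pi * c = ∫ α in (0:ℝ)..(2 * Real.pi), R α := by
        rw [hc_def]; field_simp
      simp only [hg_def]
      linear_combination hmul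
    obtain ⟨x₀, y₀, hxy₀⟩ := hnc
    have hx₀ : ∃ z, R z < R p := by
      rcases lt_or_eq_of_le (hpmax x₀) with h | h
      · exact ⟨x₀, h⟩
      · rcases lt_or_eq_of_le (hpmax y₀) with h' | h'
        · exact ⟨y₀, h'⟩
        · exact absurd (h.trans h'.symm) hxy₀
    obtain ⟨z, hz⟩ := hx₀
    obtain ⟨y, hy, hzy⟩ := hper.exists_mem_Ico₀ hπ z
    have hpos : 0 < ∫ α in (0:ℝ)..(2 * Real.pi), (R p - R α) := by
      apply intervalIntegral.integral_pos hπ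
        ((continuous_const.sub hc).continuousOn)
        (fun x _ => sub_nonneg.2 (hpmax x))
      exact ⟨y, Set.Ico_subset_Icc_self hy, sub_pos.2 (by rw [← hzy]; exact hz)⟩
    rw [key] at hpos
    nlinarith [Real.pi_pos]
  -- a point of negativity of g in (p, p + 2π)
  obtain ⟨q, hq, hgq⟩ : ∃ q ∈ Set.Ioo p (p + 2 * Real.pi), g q < 0 := by
    by_contra hcon
    push_neg at hcon
    have hle : ∀ x ∈ Set.Ioc p (p + 2 * Real.pi), 0 ≤ g x := by
      intro x hx
      rcases lt_or_eq_of_le hx.2 with h | h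
      · exact hcon x ⟨hx.1, h⟩
      · rw [h, show p + 2 * Real.pi = p + 2 * Real.pi from rfl]
        rw [hgper p]
        exact hgp.le
    have hpos : 0 < ∫ α in p..(p + 2 * Real.pi), g α :=
      intervalIntegral.integral_pos (by linarith) hgc.continuousOn hle
        ⟨p, ⟨le_refl p, by linarith⟩, hgp⟩
    rw [hgper.intervalIntegral_add_eq p 0, zero_add, hg0] at hpos
    exact lt_irrefl 0 hpos
  -- the set of negativity of g in [p, p + 2π]
  set N : Set ℝ := {t : ℝ | t ∈ Set.Icc p (p + 2 * Real.pi) ∧ g t < 0} with hN_def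
  have hNne : N.Nonempty := ⟨q, ⟨hq.1.le, hq.2.le⟩, hgq⟩
  have hNbb : BddBelow N := ⟨p, fun t ht => ht.1.1⟩
  have hNba : BddAbove N := ⟨p + 2 * Real.pi, fun t ht => ht.1.2⟩
  set u : ℝ := sInf N with hu_def
  set v : ℝ := sSup N with hv_def
  have hclosure : closure N ⊆ Set.Icc p (p + 2 * Real.pi) ∩ {t : ℝ | g t ≤ 0} := by
    apply closure_minimal
    · exact fun t ht => ⟨ht.1, ht.2.le⟩
    · exact isClosed_Icc.inter (isClosed_le hgc continuous_const)
  have hu : u ∈ Set.Icc p (p + 2 * Real.pi) ∧ g u ≤ 0 :=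
    hclosure (csInf_mem_closure hNne hNbb)
  have hv : v ∈ Set.Icc p (p + 2 * Real.pi) ∧ g v ≤ 0 :=
    hclosure (csSup_mem_closure hNne hNba)
  have hpu : p < u := by
    rcases lt_or_eq_of_le hu.1.1 with h | h
    · exact h
    · exact absurd (h ▸ hu.2) (not_le.2 hgp)
  have hvp : v < p + 2 * Real.pi := by
    rcases lt_or_eq_of_le hv.1.2 with h | h
    · exact h
    · have : g v = g p := by rw [h, hgper p]
      exact absurd (this ▸ hv.2) (not_le.2 hgp)
  have huv : u ≤ v := csInf_le_csSup hNne hNbb hNba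
  by_cases halt : ∃ t ∈ Set.Ioo u v, 0 < g t
  · -- four local extrema can be constructed explicitly
    obtain ⟨t₃, ht₃, hgt₃⟩ := halt
    obtain ⟨n, hnN, hnt⟩ := exists_lt_of_csInf_lt hNne (show sInf N < t₃ from ht₃.1)
    obtain ⟨m, hmN, htm⟩ := exists_lt_of_lt_csSup hNne (show t₃ < sSup N from ht₃.2)
    have hgn : g n < 0 := hnN.2
    have hgm : g m < 0 := hmN.2
    have hpn : p < n := by
      rcases lt_or_eq_of_le hnN.1.1 with h | h
      · exact h
      · exact absurd (h ▸ hgp) (not_lt.2 (h ▸ hgn.le))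
    have hmp : m < p + 2 * Real.pi := by
      rcases lt_or_eq_of_le hmN.1.2 with h | h
      · exact h
      · have : g m = g p := by rw [h, hgper p]
        exact absurd (this ▸ hgm) (not_lt.2 hgp.le)
    have hRnt : R n < R t₃ := by
      have : g n < g t₃ := hgn.trans hgt₃
      simpa [hg_def] using this
    have hRmt : R m < R t₃ := by
      have : g m < g t₃ := hgm.trans hgt₃
      simpa [hg_def] using this
    have hRnp : R n < R p := by
      have : g n < g p := hgn.trans hgp
      simpa [hg_def] using this
    have hRmp : R m < R p := by
      have : g m < g p := hgm.trans hgp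
      simpa [hg_def] using this
    obtain ⟨x₃, hx₃mem, hx₃max, hx₃val⟩ := locmax_aux hc (⟨hnt, htm⟩ : t₃ ∈ Set.Ioo n m)
      hRnt hRmt
    obtain ⟨x₂, hx₂mem, hx₂min, -⟩ := locmin_aux hc (⟨hpn, hx₃mem.1⟩ : n ∈ Set.Ioo p x₃)
      hRnp (lt_of_lt_of_le hRnt hx₃val)
    obtain ⟨x₄, hx₄mem, hx₄min, -⟩ := locmin_aux hc
      (⟨hx₃mem.2, hmp⟩ : m ∈ Set.Ioo x₃ (p + 2 * Real.pi))
      (lt_of_lt_of_le hRmt hx₃val) (by rw [hper p]; exact hRmp)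
    have hpmaxloc : IsLocalMax R p := Filter.Eventually.of_forall (fun x => hpmax x)
    -- order: p < x₂ < x₃ < x₄ < p + 2π
    have ho1 : p < x₂ := hx₂mem.1
    have ho2 : x₂ < x₃ := hx₂mem.2
    have ho3 : x₃ < x₄ := hx₄mem.1
    have ho4 : x₄ < p + 2 * Real.pi := hx₄mem.2
    -- reduce modulo 2π into [0, 2π)
    set red : ℝ → ℝ := fun x => if x < 2 * Real.pi then x else x - 2 * Real.pi with hred_def
    have hred_mem : ∀ x, p ≤ x → x < p + 2 * Real.pi → red x ∈ Set.Ico 0 (2 * Real.pi) := by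
      intro x h1 h2
      by_cases hx : x < 2 * Real.pi
      · simp only [hred_def, if_pos hx]
        exact ⟨le_trans hpmem.1 h1, hx⟩
      · simp only [hred_def, if_neg hx]
        push_neg at hx
        constructor <;> [linarith; linarith [hpmem.2]]
    have hred_ext : ∀ x, (IsLocalMax R x ∨ IsLocalMin R x) →
        (IsLocalMax R (red x) ∨ IsLocalMin R (red x)) := by
      intro x hx
      by_cases h : x < 2 * Real.pi
      · simpa only [hred_def, if_pos h] using hx
      · simp only [hred_def, if_neg h]
        rcases hx with hx | hx
        · exact Or.inl (localmax_shift hper hx)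
        · exact Or.inr (localmin_shift hper hx)
    have hred_inj : ∀ x y, p ≤ x → x < p + 2 * Real.pi → p ≤ y → y < p + 2 * Real.pi →
        red x = red y → x = y := by
      intro x y h1 h2 h3 h4 h
      simp only [hred_def] at h
      split_ifs at h <;> linarith
    -- the four reduced points
    set y₁ : ℝ := red p with hy₁
    set y₂ : ℝ := red x₂ with hy₂
    set y₃ : ℝ := red x₃ with hy₃
    set y₄ : ℝ := red x₄ with hy₄
    have hb₁ : p ≤ p ∧ p < p + 2 * Real.pi := ⟨le_refl _, by linarith⟩
    have hb₂ : p ≤ x₂ ∧ x₂ < p + 2 * Real.pi := ⟨ho1.le, by linarith⟩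
    have hb₃ : p ≤ x₃ ∧ x₃ < p + 2 * Real.pi := ⟨(ho1.trans ho2).le, by linarith⟩
    have hb₄ : p ≤ x₄ ∧ x₄ < p + 2 * Real.pi := ⟨(ho1.trans (ho2.trans ho3)).le, ho4⟩
    have hne : ∀ a b : ℝ, (p ≤ a ∧ a < p + 2 * Real.pi) → (p ≤ b ∧ b < p + 2 * Real.pi) →
        a ≠ b → red a ≠ red b := by
      intro a b ha hb hab h
      exact hab (hred_inj a b ha.1 ha.2 hb.1 hb.2 h)
    have h12 : y₁ ≠ y₂ := hne _ _ hb₁ hb₂ ho1.ne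
    have h13 : y₁ ≠ y₃ := hne _ _ hb₁ hb₃ (ho1.trans ho2).ne
    have h14 : y₁ ≠ y₄ := hne _ _ hb₁ hb₄ (ho1.trans (ho2.trans ho3)).ne
    have h23 : y₂ ≠ y₃ := hne _ _ hb₂ hb₃ ho2.ne
    have h24 : y₂ ≠ y₄ := hne _ _ hb₂ hb₄ (ho2.trans ho3).ne
    have h34 : y₃ ≠ y₄ := hne _ _ hb₃ hb₄ ho3.ne
    set S : Finset ℝ := {y₁, y₂, y₃, y₄} with hS_def
    have hScard : S.card = 4 := by
      rw [hS_def]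
      rw [Finset.card_insert_of_notMem (by simp [h12, h13, h14]),
        Finset.card_insert_of_notMem (by simp [h23, h24]),
        Finset.card_insert_of_notMem (by simp [h34]),
        Finset.card_singleton]
    have hall : ∀ z ∈ S, z ∈ Set.Ico 0 (2 * Real.pi) ∧
        (IsLocalMax R z ∨ IsLocalMin R z) := by
      intro z hz
      simp only [hS_def, Finset.mem_insert, Finset.mem_singleton] at hz
      rcases hz with rfl | rfl | rfl | rfl
      · exact ⟨hred_mem p hb₁.1 hb₁.2, hred_ext p (Or.inl hpmaxloc)⟩
      · exact ⟨hred_mem x₂ hb₂.1 hb₂.2, hred_ext x₂ (Or.inr hx₂min)⟩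
      · exact ⟨hred_mem x₃ hb₃.1 hb₃.2, hred_ext x₃ (Or.inl hx₃max)⟩
      · exact ⟨hred_mem x₄ hb₄.1 hb₄.2, hred_ext x₄ (Or.inr hx₄min)⟩
    refine ⟨fun i => ((S.orderIsoOfFin hScard) i : ℝ), ?_, ?_, ?_⟩
    · intro i j hij
      exact Subtype.coe_lt_coe.2 ((S.orderIsoOfFin hScard).strictMono hij)
    · intro i
      exact (hall _ ((S.orderIsoOfFin hScard) i).2).1
    · intro i
      exact (hall _ ((S.orderIsoOfFin hScard) i).2).2
  · -- integral contradiction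
    push_neg at halt
    exfalso
    set m₀ : ℝ := (u + v) / 2 with hm₀_def
    set s' : ℝ → ℝ := fun α => (Real.cos ((v - u) / 2) - Real.cos (α - m₀)) / 2 with hs'_def
    have hs'c : Continuous s' := by
      apply Continuous.div_const
      exact continuous_const.sub (Real.continuous_cos.comp (continuous_id.sub continuous_const))
    have hs'_eq : ∀ α : ℝ, s' α = Real.sin ((α - u) / 2) * Real.sin ((α - v) / 2) := by
      intro α
      have h1 : ((v - u) / 2 + (α - m₀)) / 2 = (α - u) / 2 := by rw [hm₀_def]; ring
      have h2 : ((v - u) / 2 - (α - m₀)) / 2 = -((α - v) / 2) := by rw [hm₀_def]; ring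
      simp only [hs'_def]
      rw [Real.cos_sub_cos, h1, h2, Real.sin_neg]
      ring
    set f : ℝ → ℝ := fun α => g α * s' α with hf_def
    have hfc : Continuous f := hgc.mul hs'c
    have hfper : Function.Periodic f (2 * Real.pi) := by
      intro x
      have h1 : g (x + 2 * Real.pi) = g x := hgper x
      have h2 : Real.cos (x + 2 * Real.pi - m₀) = Real.cos (x - m₀) := by
        rw [show x + 2 * Real.pi - m₀ = x - m₀ + 2 * Real.pi by ring, Real.cos_add_two_pi]
      simp only [hf_def, hs'_def, h1, h2]
    have hvu : v - u < 2 * Real.pi := by linarith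
    -- nonnegativity of f on [u, u + 2π]
    have hf_nonneg : ∀ t ∈ Set.Icc u (u + 2 * Real.pi), 0 ≤ f t := by
      intro t ht
      rcases le_or_gt t v with h1 | h1
      · -- t ∈ [u, v]
        have hg_t : g t ≤ 0 := by
          rcases lt_or_eq_of_le ht.1 with h2 | h2
          · rcases lt_or_eq_of_le h1 with h3 | h3
            · exact halt t ⟨h2, h3⟩
            · exact h3 ▸ hv.2
          · exact h2 ▸ hu.2
        have hsin1 : 0 ≤ Real.sin ((t - u) / 2) := by
          apply Real.sin_nonneg_of_nonneg_of_le_pi <;> [linarith [ht.1]; linarith]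
        have hsin2 : Real.sin ((t - v) / 2) ≤ 0 := by
          rw [show (t - v) / 2 = -((v - t) / 2) by ring, Real.sin_neg, neg_nonpos]
          apply Real.sin_nonneg_of_nonneg_of_le_pi <;> [linarith; linarith [ht.1]]
        have hs_t : s' t ≤ 0 := by
          rw [hs'_eq]
          exact mul_nonpos_of_nonneg_of_nonpos hsin1 hsin2
        simp only [hf_def]
        exact mul_nonneg_of_nonpos_of_nonpos hg_t hs_t
      · -- t ∈ (v, u + 2π]
        rcases lt_or_eq_of_le ht.2 with h2 | h2
        · have hg_t : 0 ≤ g t := by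
            rcases le_or_gt t (p + 2 * Real.pi) with h3 | h3
            · -- t ∈ (v, p + 2π] : t is above sSup N so not in N
              by_contra hlt
              push_neg at hlt
              have : t ∈ N := ⟨⟨by linarith, h3⟩, hlt⟩
              exact absurd (le_csSup hNba this) (not_le.2 h1)
            · -- t ∈ (p + 2π, u + 2π) : t - 2π ∈ (p, u), below sInf N
              have hgt : g t = g (t - 2 * Real.pi) := by
                rw [← hgper (t - 2 * Real.pi), sub_add_cancel]
              rw [hgt]
              by_contra hlt
              push_neg at hlt
              have : t - 2 * Real.pi ∈ N := ⟨⟨by linarith, by linarith⟩, hlt⟩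
              have := csInf_le hNbb this
              rw [← hu_def] at this
              linarith
          have hsin1 : 0 ≤ Real.sin ((t - u) / 2) := by
            apply Real.sin_nonneg_of_nonneg_of_le_pi <;> [linarith [ht.1]; linarith]
          have hsin2 : 0 ≤ Real.sin ((t - v) / 2) := by
            apply Real.sin_nonneg_of_nonneg_of_le_pi <;> [linarith; linarith]
          have hs_t : 0 ≤ s' t := by rw [hs'_eq]; exact mul_nonneg hsin1 hsin2
          simp only [hf_def]
          exact mul_nonneg hg_t hs_t
        · -- t = u + 2π : s' t = 0
          simp only [hf_def]
          rw [hs'_eq, h2, show (u + 2 * Real.pi - u) / 2 = Real.pi by ring, Real.sin_pi]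
          simp
    -- strict positivity at p + 2π
    have hfpt : 0 < f (p + 2 * Real.pi) := by
      have hg_pos : 0 < g (p + 2 * Real.pi) := by rw [hgper p]; exact hgp
      have hsin1 : 0 < Real.sin ((p + 2 * Real.pi - u) / 2) := by
        apply Real.sin_pos_of_pos_of_lt_pi <;> linarith
      have hsin2 : 0 < Real.sin ((p + 2 * Real.pi - v) / 2) := by
        apply Real.sin_pos_of_pos_of_lt_pi <;> linarith
      simp only [hf_def]
      rw [hs'_eq]
      exact mul_pos hg_pos (mul_pos hsin1 hsin2)
    have hfpos : 0 < ∫ t in u..(u + 2 * Real.pi), f t := by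
      apply intervalIntegral.integral_pos (by linarith) hfc.continuousOn
        (fun x hx => hf_nonneg x (Set.Ioc_subset_Icc_self hx))
      exact ⟨p + 2 * Real.pi, ⟨by linarith, by linarith⟩, hfpt⟩
    have hfzero : ∫ t in u..(u + 2 * Real.pi), f t = 0 := by
      rw [hfper.intervalIntegral_add_eq u 0, zero_add]
      have hptw : ∀ α : ℝ, f α = (Real.cos ((v - u) / 2) / 2) * g α
          - (1 / 2) * (g α * Real.cos (α - m₀)) := by
        intro α
        simp only [hf_def, hs'_def]
        ring
      rw [intervalIntegral.integral_congr (fun α _ => hptw α),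
        intervalIntegral.integral_sub, intervalIntegral.integral_const_mul,
        intervalIntegral.integral_const_mul, hg0, hgcos m₀]
      · ring
      · exact (continuous_const.mul hgc).intervalIntegrable _ _
      · exact (continuous_const.mul (hgc.mul
          (Real.continuous_cos.comp (continuous_id.sub continuous_const)))).intervalIntegrable _ _
    rw [hfzero] at hfpos
    exact lt_irrefl 0 hfpos
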